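/- If (e_1,...,e_n) ∈ [0,1]^n is an equilibrium of the ribosome flow model on a ring with positive rates λ_1,...,λ_n, and e_i = 0 for some i, then e_j = 0 for all j. -/

import Mathlib

open Finset Set

def IsEquilibrium (n : ℕ) [NeZero n] (lam e : Fin n → ℝ) : Prop :=
  ∀ i j : Fin n, lam i * e i * (1 - e (i + 1)) = lam j * e j * (1 - e (j + 1))

theorem stmt0 (n : ℕ) [NeZero n] (hn : 2 ≤ n) (lam e : Fin n → ℝ)
    (hlam : ∀ i, 0 < lam i) (he : ∀ i, e i ∈ Set.Icc (0:ℝ) 1)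
    (heq : IsEquilibrium n lam e) (i : Fin n) (hi : e i = 0) :
    ∀ j, e j = 0 := by
  -- all fluxes are zero
  have hflux : ∀ m : Fin n, lam m * e m * (1 - e (m + 1)) = 0 := by
    intro m
    rw [heq m i, hi]
    ring
  -- propagation of value 1
  have hprop : ∀ m : Fin n, e m = 1 → e (m + 1) = 1 := by
    intro m hm
    have h := hflux m
    rw [hm, mul_one] at h
    rcases mul_eq_zero.mp h with h' | h'
    · exact absurd h' (ne_of_gt (hlam m))
    · linarith
  open Fin.CommRing in
  have hiter : ∀ (k : ℕ) (m : Fin n), e m = 1 → e (m + (k : Fin n)) = 1 := by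
    intro k
    induction k with
    | zero => intro m hm; simpa using hm
    | succ k ih =>
      intro m hm
      have := hprop _ (ih m hm)
      have harith : m + ((k + 1 : ℕ) : Fin n) = m + (k : Fin n) + 1 := by
        push_cast; ring
      rw [harith]
      exact this
  intro j
  by_contra hj
  -- then e (j+1) = 1
  have h1 : e (j + 1) = 1 := by
    have h := hflux j
    rcases mul_eq_zero.mp h with h' | h'
    · rcases mul_eq_zero.mp h' with h'' | h''
      · exact absurd h'' (ne_of_gt (hlam j))
      · exact absurd h'' hj
    · linarith
  open Fin.CommRing in
  have := hiter (i - (j + 1)).val (j + 1) h1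
  open Fin.CommRing in
  rw [Fin.cast_val_eq_self, add_sub_cancel] at this
  rw [hi] at this
  linarith
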